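/- For α ∈ (0,1) ∪ (1,∞) with α ≠ 1, the α-loss ℓ_α(y, r) = (α/(α−1))(1 − r(y)^{1−1/α}) is not a proper scoring rule: there exist a finite set Y and distributions p, r ∈ Δ(Y) such that E_{Y∼p}[ℓ_α(Y, r)] < E_{Y∼p}[ℓ_α(Y, p)]. -/

import Mathlib

open BigOperators

/-- For every `α > 0`, `α ≠ 1`, the α-loss is not a proper scoring rule:
there exist a finite set `Y` (of size `n`) and distributions `p, r` on it with
`E_{Y∼p}[ℓ_α(Y,r)] < E_{Y∼p}[ℓ_α(Y,p)]`. -/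
theorem stmt_7 (α : ℝ) (hα : 0 < α) (hα1 : α ≠ 1) :
    ∃ (n : ℕ) (p r : Fin n → ℝ),
      (∀ y, 0 ≤ p y) ∧ (∑ y, p y = 1) ∧
      (∀ y, 0 ≤ r y) ∧ (∑ y, r y = 1) ∧
      ∑ y, p y * (α / (α - 1) * (1 - r y ^ (1 - 1 / α)))
        < ∑ y, p y * (α / (α - 1) * (1 - p y ^ (1 - 1 / α))) := by
  have hα0 : α ≠ 0 := ne_of_gt hα
  have hαm : α - 1 ≠ 0 := sub_ne_zero.mpr hα1
  set β : ℝ := 1 - 1 / α with hβdef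
  set c : ℝ := α / (α - 1) with hcdef
  have hβ0 : β ≠ 0 := by
    rw [hβdef]
    intro h
    have : (1:ℝ) / α = 1 := by linarith
    have : α = 1 := by field_simp at this; linarith
    exact hα1 this
  have hcβ : c * β = 1 := by
    rw [hcdef, hβdef]; field_simp
  set F : ℝ → ℝ := fun x =>
    2/3 * (c * (1 - x ^ β)) + 1/3 * (c * (1 - (1 - x) ^ β)) with hFdef
  set d : ℝ := (1/3 : ℝ) ^ β - (2/3 : ℝ) ^ β with hddef
  -- derivative of F at 2/3 is d
  have h1 : HasDerivAt (fun x : ℝ => x ^ β) (β * (2/3 : ℝ) ^ (β - 1)) (2/3) := by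
    exact Real.hasDerivAt_rpow_const (Or.inl (by norm_num))
  have h2 : HasDerivAt (fun x : ℝ => (1 - x) ^ β)
      ((-1) * β * ((1 - (2/3 : ℝ)) ^ (β - 1))) (2/3) := by
    have hsub : HasDerivAt (fun x : ℝ => 1 - x) (-1) (2/3) := by
      simpa using (hasDerivAt_id' (2/3 : ℝ)).const_sub 1
    simpa using hsub.rpow_const (Or.inl (by norm_num))
  have hF : HasDerivAt F d (2/3) := by
    have := ((h1.const_mul c).const_mul (2/3 : ℝ)).neg.add
      (((h2.const_mul c).const_mul (1/3 : ℝ)).neg)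
    -- rewrite F as the corresponding function
    have hFeq : F = fun x =>
        -(2/3 * (c * x ^ β)) + -(1/3 * (c * (1 - x) ^ β)) + c := by
      funext x; rw [hFdef]; ring
    rw [hFeq]
    have h23 : (2/3 : ℝ) * (2/3 : ℝ) ^ (β - 1) = (2/3 : ℝ) ^ β := by
      rw [Real.rpow_sub (by norm_num), Real.rpow_one]; ring
    have h13 : (1/3 : ℝ) * (1/3 : ℝ) ^ (β - 1) = (1/3 : ℝ) ^ β := by
      rw [Real.rpow_sub (by norm_num), Real.rpow_one]; ring
    have hval : -(2/3 * (c * (β * (2/3 : ℝ) ^ (β - 1)))) +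
        -(1/3 * (c * ((-1) * β * ((1 - (2/3 : ℝ)) ^ (β - 1))))) = d := by
      have : (1 : ℝ) - 2/3 = 1/3 := by norm_num
      rw [this, hddef]
      have e1 : (2:ℝ)/3 * (c * (β * (2/3 : ℝ) ^ (β - 1)))
          = (c * β) * ((2/3 : ℝ) * (2/3 : ℝ) ^ (β - 1)) := by ring
      have e2 : (1:ℝ)/3 * (c * ((-1) * β * ((1/3 : ℝ) ^ (β - 1))))
          = -((c * β) * ((1/3 : ℝ) * (1/3 : ℝ) ^ (β - 1))) := by ring
      rw [e1, e2, h23, h13, hcβ]; ring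
    have := this.add_const c
    rw [hval] at this
    exact this
  have hdne : d ≠ 0 := by
    rw [hddef]
    rcases lt_or_gt_of_ne hβ0 with hneg | hpos
    · have : (2/3 : ℝ) ^ β < (1/3 : ℝ) ^ β :=
        Real.rpow_lt_rpow_of_neg (by norm_num) (by norm_num) hneg
      exact ne_of_gt (by linarith)
    · have : (1/3 : ℝ) ^ β < (2/3 : ℝ) ^ β :=
        Real.rpow_lt_rpow (by norm_num) (by norm_num) hpos
      exact ne_of_lt (by linarith)
  have hex : ∃ b ∈ Set.Ioo (0:ℝ) 1, F b < F (2/3) := by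
    by_contra h
    push_neg at h
    have hmin : IsLocalMin F (2/3) := by
      have hmem : Set.Ioo (0:ℝ) 1 ∈ nhds (2/3 : ℝ) :=
        isOpen_Ioo.mem_nhds (by norm_num)
      exact Filter.eventually_of_mem hmem fun b hb => h b hb
    exact hdne (hmin.hasDerivAt_eq_zero hF)
  obtain ⟨b, hb, hlt⟩ := hex
  refine ⟨2, ![2/3, 1/3], ![b, 1 - b], ?_, ?_, ?_, ?_, ?_⟩
  · intro y; fin_cases y <;> norm_num
  · rw [Fin.sum_univ_two]; norm_num
  · intro y; fin_cases y <;> simp <;> [exact le_of_lt hb.1; linarith [hb.2]]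
  · rw [Fin.sum_univ_two]; simp
  · rw [Fin.sum_univ_two, Fin.sum_univ_two]
    have hL : (![(2:ℝ)/3, 1/3] 0) * (α / (α - 1) * (1 - (![b, 1-b] 0) ^ (1 - 1/α)))
        + (![(2:ℝ)/3, 1/3] 1) * (α / (α - 1) * (1 - (![b, 1-b] 1) ^ (1 - 1/α))) = F b := by
      rw [hFdef]; simp [hβdef, hcdef]
    have hR : (![(2:ℝ)/3, 1/3] 0) * (α / (α - 1) * (1 - (![(2:ℝ)/3, 1/3] 0) ^ (1 - 1/α)))
        + (![(2:ℝ)/3, 1/3] 1) * (α / (α - 1) * (1 - (![(2:ℝ)/3, 1/3] 1) ^ (1 - 1/α))) = F (2/3) := by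
      rw [hFdef]; norm_num [hβdef, hcdef]
    rw [hL, hR]
    exact hlt
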